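/- Let μ⊗ν be the product of arbitrary measures μ, ν on σ-rings 𝔖, 𝔗 (equal to μ^σ⊗ν^σ on σ-finite sets and ∞ elsewhere). If A ∈ 𝔖 is not μ-σ-finite and B ∈ 𝔗 is nonempty (or symmetrically), then (μ⊗ν)(A × B) = ∞. -/
import Mathlib


open Set ENNReal

/-- A family of sets is a σ-ring if it contains `∅` and is closed under
set differences and countable unions. -/
def IsSigmaRing {α : Type*} (C : Set (Set α)) : Prop :=
  ∅ ∈ C ∧ (∀ A B : Set α, A ∈ C → B ∈ C → A \ B ∈ C) ∧
    ∀ f : ℕ → Set α, (∀ n, f n ∈ C) → (⋃ n, f n) ∈ C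

/-- The σ-ring generated by a family of sets. -/
def genSR {α : Type*} (D : Set (Set α)) : Set (Set α) :=
  ⋂₀ {C | IsSigmaRing C ∧ D ⊆ C}

/-- A measure on a σ-ring: countably additive, vanishing on `∅`. -/
def IsMeasure {α : Type*} (C : Set (Set α)) (μ : Set α → ℝ≥0∞) : Prop :=
  μ ∅ = 0 ∧ ∀ f : ℕ → Set α, (∀ n, f n ∈ C) →
    Pairwise (Function.onFun Disjoint f) → μ (⋃ n, f n) = ∑' n, μ (f n)

/-- The family of μ-σ-finite sets: countable unions of sets of finite measure. -/
def sigmaFin {α : Type*} (C : Set (Set α)) (μ : Set α → ℝ≥0∞) : Set (Set α) :=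
  {A | ∃ g : ℕ → Set α, (∀ n, g n ∈ C ∧ μ (g n) < ⊤) ∧ A = ⋃ n, g n}

/-- Restriction of a family of sets to a set `S`. -/
def restrictFam {α : Type*} (D : Set (Set α)) (S : Set α) : Set (Set α) :=
  (fun A => A ∩ S) '' D

/-- The product σ-ring, generated by measurable rectangles. -/
def prodSR {α β : Type*} (S : Set (Set α)) (T : Set (Set β)) : Set (Set (α × β)) :=
  genSR {R | ∃ A ∈ S, ∃ B ∈ T, R = A ×ˢ B}

/-- The σ-algebra generated by a family of sets. -/
def genSA {α : Type*} (D : Set (Set α)) : MeasurableSpace α :=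
  MeasurableSpace.generateFrom D

/-- The (extended) Lebesgue integral of a nonnegative function with respect to a
measure on a σ-ring, as the supremum of integrals of simple functions below it. -/
noncomputable def lintSR {α : Type*} (C : Set (Set α)) (μ : Set α → ℝ≥0∞)
    (f : α → ℝ≥0∞) : ℝ≥0∞ :=
  ⨆ (n : ℕ) (c : Fin n → ℝ≥0∞) (A : Fin n → Set α) (_ : ∀ i, A i ∈ C)
    (_ : ∀ x, (∑ i, (A i).indicator (fun _ => c i) x) ≤ f x),
    ∑ i, c i * μ (A i)

/-- The positive part of an extended real, as an `ℝ≥0∞`. -/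
noncomputable def epos (x : EReal) : ℝ≥0∞ := (x ⊔ 0).abs

/-- Measurability of an extended-real function with respect to a σ-ring:
measurable for the generated σ-algebra, with support in the σ-ring. -/
def SRMeasurableE {α : Type*} (C : Set (Set α)) (f : α → EReal) : Prop :=
  @Measurable α EReal (genSA C) _ f ∧ {x | f x ≠ 0} ∈ C

/-- The Lebesgue integral of an extended-real function w.r.t. a measure on a σ-ring. -/
noncomputable def integralE {α : Type*} (C : Set (Set α)) (μ : Set α → ℝ≥0∞)
    (f : α → EReal) : EReal :=
  ((lintSR C μ fun x => epos (f x) : ℝ≥0∞) : EReal) -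
    ((lintSR C μ fun x => epos (-f x) : ℝ≥0∞) : EReal)

/-- Integrability of an extended-real function w.r.t. a measure on a σ-ring. -/
def IntegrableE {α : Type*} (C : Set (Set α)) (μ : Set α → ℝ≥0∞)
    (f : α → EReal) : Prop :=
  SRMeasurableE C f ∧ lintSR C μ (fun x => (f x).abs) < ⊤

/-- `lam` is the product of the measures `μ` and `ν` on σ-rings `S`, `T`:
the unique measure on the product σ-ring whose σ-finite component is the Halmos
product of the σ-finite components. -/
def IsProdMeasure {α β : Type*} (S : Set (Set α)) (T : Set (Set β))
    (μ : Set α → ℝ≥0∞) (ν : Set β → ℝ≥0∞) (lam : Set (α × β) → ℝ≥0∞) : Prop :=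
  IsMeasure (prodSR S T) lam ∧
  (∀ A ∈ S, ∀ B ∈ T, μ A < ⊤ → ν B < ⊤ → lam (A ×ˢ B) = μ A * ν B) ∧
  sigmaFin (prodSR S T) lam =
    genSR {R | ∃ A ∈ S, ∃ B ∈ T, μ A < ⊤ ∧ ν B < ⊤ ∧ R = A ×ˢ B}

lemma subset_genSR' {α : Type*} (D : Set (Set α)) : D ⊆ genSR D := by
  intro A hA C hC
  exact hC.2 hA

lemma genSR_subset' {α : Type*} {D C : Set (Set α)} (hC : IsSigmaRing C)
    (hDC : D ⊆ C) : genSR D ⊆ C := by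
  intro A hA
  exact hA C ⟨hC, hDC⟩

lemma meas_mono' {α : Type*} {S : Set (Set α)} {μ : Set α → ℝ≥0∞}
    (hS : IsSigmaRing S) (hμ : IsMeasure S μ) {X Y : Set α}
    (hX : X ∈ S) (hY : Y ∈ S) (hXY : X ⊆ Y) : μ X ≤ μ Y := by
  set f : ℕ → Set α := fun n => if n = 0 then X else if n = 1 then Y \ X else ∅ with hf
  have hfm : ∀ n, f n ∈ S := by
    intro n
    simp only [hf]
    split
    · exact hX
    · split
      · exact hS.2.1 Y X hY hX
      · exact hS.1
  have hdisj : Pairwise (Function.onFun Disjoint f) := by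
    intro i j hij
    simp only [Function.onFun, hf]
    rcases Nat.eq_zero_or_pos i with hi | hi
    · subst hi
      simp only [if_pos rfl]
      rcases Nat.eq_zero_or_pos (j-1) with hj | hj
      · have : j = 1 := by omega
        subst this
        simp only [if_neg one_ne_zero, if_pos rfl]
        exact disjoint_sdiff_right
      · have h2 : j ≠ 0 := by omega
        have h3 : j ≠ 1 := by omega
        simp [h2, h3]
    · rcases Nat.eq_zero_or_pos j with hj | hj
      · subst hj
        have h2 : i ≠ 0 := by omega
        simp only [if_neg h2, if_pos rfl]
        rcases eq_or_ne i 1 with h3 | h3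
        · subst h3; simp; exact disjoint_sdiff_left
        · simp [h3]
      · rcases eq_or_ne i 1 with h3 | h3
        · subst h3
          have h4 : j ≠ 0 := by omega
          have h5 : j ≠ 1 := by omega
          simp [h4, h5]
        · have h2 : i ≠ 0 := by omega
          simp [h2, h3]
  have hun : (⋃ n, f n) = Y := by
    apply Set.Subset.antisymm
    · apply Set.iUnion_subset
      intro n
      simp only [hf]
      split
      · exact hXY
      · split
        · exact Set.diff_subset
        · exact Set.empty_subset _
    · intro x hx
      by_cases hxX : x ∈ X
      · exact Set.mem_iUnion.2 ⟨0, by simpa [hf] using hxX⟩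
      · exact Set.mem_iUnion.2 ⟨1, by simp [hf, hx, hxX]⟩
  have := hμ.2 f hfm hdisj
  rw [hun] at this
  rw [this]
  have h0 : μ X = μ (f 0) := by simp [hf]
  rw [h0]
  exact ENNReal.le_tsum 0

/-- The family of sets covered by a countable union of members of `D` (or `∅`)
is a σ-ring. -/
lemma cover_isSigmaRing {α : Type*} (D : Set (Set α)) :
    IsSigmaRing {E : Set α | ∃ f : ℕ → Set α,
      (∀ n, f n ∈ D ∨ f n = ∅) ∧ E ⊆ ⋃ n, f n} := by
  refine ⟨⟨fun _ => ∅, fun _ => Or.inr rfl, Set.empty_subset _⟩, ?_, ?_⟩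
  · rintro A B ⟨f, hf, hAf⟩ _
    exact ⟨f, hf, Set.diff_subset.trans hAf⟩
  · intro g hg
    choose f hf1 hf2 using hg
    refine ⟨fun n => f (Nat.unpair n).1 (Nat.unpair n).2, fun n => hf1 _ _, ?_⟩
    intro x hx
    obtain ⟨k, hk⟩ := Set.mem_iUnion.1 hx
    obtain ⟨m, hm⟩ := Set.mem_iUnion.1 (hf2 k hk)
    exact Set.mem_iUnion.2 ⟨Nat.pair k m, by simpa [Nat.unpair_pair] using hm⟩

/-- the product measure takes the value `∞` on a rectangle in
which one side is not σ-finite and the other is nonempty. -/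
theorem stmt_12 {α β : Type*} (S : Set (Set α)) (T : Set (Set β))
    (μ : Set α → ℝ≥0∞) (ν : Set β → ℝ≥0∞)
    (hS : IsSigmaRing S) (hT : IsSigmaRing T)
    (hμ : IsMeasure S μ) (hν : IsMeasure T ν)
    (lam : Set (α × β) → ℝ≥0∞) (hlam : IsProdMeasure S T μ ν lam)
    (A : Set α) (B : Set β) (hA : A ∈ S) (hB : B ∈ T)
    (h : (A ∉ sigmaFin S μ ∧ B.Nonempty) ∨ (B ∉ sigmaFin T ν ∧ A.Nonempty)) :
    lam (A ×ˢ B) = ⊤ := by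
  by_contra h'
  have hlt : lam (A ×ˢ B) < ⊤ := lt_top_iff_ne_top.2 h'
  -- A ×ˢ B is σ-finite for lam
  have hmem : A ×ˢ B ∈ prodSR S T :=
    subset_genSR' _ ⟨A, hA, B, hB, rfl⟩
  have hsf : A ×ˢ B ∈ sigmaFin (prodSR S T) lam :=
    ⟨fun _ => A ×ˢ B, fun _ => ⟨hmem, hlt⟩, (Set.iUnion_const _).symm⟩
  rw [hlam.2.2] at hsf
  -- So A ×ˢ B is covered by countably many finite rectangles
  set D' : Set (Set (α × β)) :=
    {R | ∃ A ∈ S, ∃ B ∈ T, μ A < ⊤ ∧ ν B < ⊤ ∧ R = A ×ˢ B} with hD'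
  have hcov : A ×ˢ B ∈ {E : Set (α × β) | ∃ f : ℕ → Set (α × β),
      (∀ n, f n ∈ D' ∨ f n = ∅) ∧ E ⊆ ⋃ n, f n} :=
    genSR_subset' (cover_isSigmaRing D')
      (fun R hR => ⟨fun _ => R, fun _ => Or.inl hR,
        fun x hx => Set.mem_iUnion.2 ⟨0, hx⟩⟩) hsf
  obtain ⟨f, hf, hABf⟩ := hcov
  have hrect : ∀ n, ∃ A' B', A' ∈ S ∧ B' ∈ T ∧ μ A' < ⊤ ∧ ν B' < ⊤ ∧
      f n ⊆ A' ×ˢ B' := by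
    intro n
    rcases hf n with ⟨A', hA', B', hB', hμ', hν', hfn⟩ | hfn
    · exact ⟨A', B', hA', hB', hμ', hν', hfn.subset⟩
    · refine ⟨∅, ∅, hS.1, hT.1, ?_, ?_, by simp [hfn]⟩
      · rw [hμ.1]; exact ENNReal.zero_lt_top
      · rw [hν.1]; exact ENNReal.zero_lt_top
  choose Af Bf hAf hBf hμf hνf hsub using hrect
  rcases h with ⟨hAnsf, b, hb⟩ | ⟨hBnsf, a, ha⟩
  · apply hAnsf
    have hin : ∀ n, A ∩ Af n ∈ S := fun n => by
      have h1 := hS.2.1 A (A \ Af n) hA (hS.2.1 A (Af n) hA (hAf n))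
      rwa [Set.diff_diff_right_self] at h1
    refine ⟨fun n => A ∩ Af n, fun n => ⟨hin n, ?_⟩, ?_⟩
    · exact lt_of_le_of_lt
        (meas_mono' hS hμ (hin n) (hAf n) Set.inter_subset_right) (hμf n)
    · apply Set.Subset.antisymm
      · intro x hx
        have hxb : (x, b) ∈ A ×ˢ B := ⟨hx, hb⟩
        obtain ⟨n, hn⟩ := Set.mem_iUnion.1 (hABf hxb)
        exact Set.mem_iUnion.2 ⟨n, hx, (hsub n hn).1⟩
      · exact Set.iUnion_subset fun n => Set.inter_subset_left
  · apply hBnsf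
    have hin : ∀ n, B ∩ Bf n ∈ T := fun n => by
      have h1 := hT.2.1 B (B \ Bf n) hB (hT.2.1 B (Bf n) hB (hBf n))
      rwa [Set.diff_diff_right_self] at h1
    refine ⟨fun n => B ∩ Bf n, fun n => ⟨hin n, ?_⟩, ?_⟩
    · exact lt_of_le_of_lt
        (meas_mono' hT hν (hin n) (hBf n) Set.inter_subset_right) (hνf n)
    · apply Set.Subset.antisymm
      · intro x hx
        have hxa : (a, x) ∈ A ×ˢ B := ⟨ha, hx⟩
        obtain ⟨n, hn⟩ := Set.mem_iUnion.1 (hABf hxa)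
        exact Set.mem_iUnion.2 ⟨n, hx, (hsub n hn).2⟩
      · exact Set.iUnion_subset fun n => Set.inter_subset_left
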